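/- φ_{h,d}(s) is invariant under replacing h by its inverse h' modulo d and s by -h'·s: that is, if h·h' ≡ 1 (mod d), then φ_{h',d}(-h's) = φ_{h,d}(s) for every integer s. -/

import Mathlib

/-- `e(x) = exp(2πi x)`. -/
noncomputable def ee (x : ℝ) : ℂ := Complex.exp (2 * Real.pi * Complex.I * x)

/-- The generalized Dedekind sum
`φ_{h,d}(s) = ∑_{k=1}^{d-1} e(ks/d) / ((1 - e(kh/d)) (1 - e(-k/d)))`. -/
noncomputable def phi (h : ℤ) (d : ℕ) (s : ℤ) : ℂ :=
  ∑ k ∈ Finset.Ico 1 d,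
    ee ((k : ℝ) * (s : ℝ) / d) /
      ((1 - ee ((k : ℝ) * (h : ℝ) / d)) * (1 - ee (-(k : ℝ) / d)))

lemma ee_add_int (x : ℝ) (m : ℤ) : ee (x + m) = ee x := by
  unfold ee
  have : ((x + (m : ℝ) : ℝ) : ℂ) = (x : ℂ) + (m : ℂ) := by push_cast; ring
  rw [this, mul_add, Complex.exp_add,
    show (2 * (Real.pi : ℂ) * Complex.I * (m : ℂ)) = (m : ℂ) * (2 * Real.pi * Complex.I) by ring,
    Complex.exp_int_mul_two_pi_mul_I, mul_one]

lemma ee_eq {d : ℕ} (hd : 0 < d) {a b : ℤ} (hab : a ≡ b [ZMOD (d : ℤ)]) :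
    ee ((a : ℝ) / d) = ee ((b : ℝ) / d) := by
  obtain ⟨m, hm⟩ := Int.ModEq.dvd hab.symm
  have hd' : (d : ℝ) ≠ 0 := by exact_mod_cast hd.ne'
  have : (a : ℝ) / d = (b : ℝ) / d + (m : ℤ) := by
    have ha : (a : ℝ) = b + d * m := by exact_mod_cast (by linarith [hm] : a = b + (d : ℤ) * m)
    rw [ha]; field_simp
  rw [this, ee_add_int]

theorem phi_inverse_invariance (d : ℕ) (hd : 1 ≤ d) (h h' : ℤ)
    (hinv : h * h' ≡ 1 [ZMOD (d : ℤ)]) (s : ℤ) :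
    phi h' d (-h' * s) = phi h d s := by
  have hd0 : 0 < d := hd
  have hdz : (d : ℤ) ≠ 0 := by exact_mod_cast hd0.ne'
  -- common fact: mapping k ↦ toNat ((-a*k) % d) stays in Ico 1 d, for a with a*b ≡ 1
  have key : ∀ (a b : ℤ), a * b ≡ 1 [ZMOD (d : ℤ)] → ∀ k ∈ Finset.Ico 1 d,
      ((-a * (k : ℤ)) % d).toNat ∈ Finset.Ico 1 d := by
    intro a b hab k hk
    rw [Finset.mem_Ico] at hk ⊢
    have h0 : (0 : ℤ) ≤ (-a * (k : ℤ)) % d := Int.emod_nonneg _ hdz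
    have h1 : (-a * (k : ℤ)) % d < d := Int.emod_lt_of_pos _ (by exact_mod_cast hd0)
    have hne : (-a * (k : ℤ)) % d ≠ 0 := by
      intro h0'
      have hdvd : (d : ℤ) ∣ -a * (k : ℤ) := Int.dvd_of_emod_eq_zero h0'
      have hdvd2 : (d : ℤ) ∣ (k : ℤ) := by
        have : (k : ℤ) ≡ a * b * (k : ℤ) [ZMOD (d : ℤ)] := by
          calc (k : ℤ) = 1 * (k : ℤ) := by ring
          _ ≡ a * b * (k : ℤ) [ZMOD (d : ℤ)] := (hab.symm).mul_right _
        have h2 : (d : ℤ) ∣ a * b * (k : ℤ) := by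
          have : (d : ℤ) ∣ (-a * (k : ℤ)) * (-b) := hdvd.mul_right _
          convert this using 1; ring
        have h3 := (Int.modEq_zero_iff_dvd).mpr h2
        exact (Int.modEq_zero_iff_dvd).mp (this.trans h3)
      have : (d : ℤ) ≤ (k : ℤ) := Int.le_of_dvd (by exact_mod_cast hk.1) hdvd2
      exact absurd hk.2 (not_lt.mpr (by exact_mod_cast this))
    constructor
    · omega
    · omega
  have hinv' : h' * h ≡ 1 [ZMOD (d : ℤ)] := by rwa [mul_comm] at hinv
  -- congruence fact for inverse composition
  have compinv : ∀ (a b : ℤ), a * b ≡ 1 [ZMOD (d : ℤ)] → ∀ k ∈ Finset.Ico 1 d,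
      ((-b * ((((-a * (k : ℤ)) % d).toNat : ℤ)) % d)).toNat = k := by
    intro a b hab k hk
    rw [Finset.mem_Ico] at hk
    have h0 : (0 : ℤ) ≤ (-a * (k : ℤ)) % d := Int.emod_nonneg _ hdz
    have hcast : ((((-a * (k : ℤ)) % d).toNat : ℤ)) = (-a * (k : ℤ)) % d :=
      Int.toNat_of_nonneg h0
    rw [hcast]
    have hcong : -b * ((-a * (k : ℤ)) % d) ≡ (k : ℤ) [ZMOD (d : ℤ)] := by
      have h1 : ((-a * (k : ℤ)) % d) ≡ -a * (k : ℤ) [ZMOD (d : ℤ)] := Int.emod_emod_of_dvd _ dvd_rfl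
      calc -b * ((-a * (k : ℤ)) % d) ≡ -b * (-a * (k : ℤ)) [ZMOD (d : ℤ)] := h1.mul_left _
        _ = a * b * (k : ℤ) := by ring
        _ ≡ 1 * (k : ℤ) [ZMOD (d : ℤ)] := hab.mul_right _
        _ = (k : ℤ) := by ring
    have : (-b * ((-a * (k : ℤ)) % d)) % d = (k : ℤ) % d := hcong
    have hk' : (k : ℤ) % d = (k : ℤ) :=
      Int.emod_eq_of_lt (by exact_mod_cast Nat.zero_le k) (by exact_mod_cast hk.2)
    rw [this, hk']
    exact Int.toNat_natCast k
  unfold phi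
  symm
  refine Finset.sum_nbij' (i := fun k => ((-h * (k : ℤ)) % d).toNat)
    (j := fun k => ((-h' * (k : ℤ)) % d).toNat)
    (hi := key h h' hinv) (hj := key h' h hinv')
    (left_neg := compinv h h' hinv) (right_neg := compinv h' h hinv') ?_
  intro k hk
  rw [Finset.mem_Ico] at hk
  set j : ℕ := ((-h * (k : ℤ)) % d).toNat with hjdef
  have h0 : (0 : ℤ) ≤ (-h * (k : ℤ)) % d := Int.emod_nonneg _ hdz
  have hjcast : ((j : ℤ)) = (-h * (k : ℤ)) % d := Int.toNat_of_nonneg h0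
  have hjk : (j : ℤ) ≡ -h * (k : ℤ) [ZMOD (d : ℤ)] := by
    rw [hjcast]; exact Int.emod_emod_of_dvd _ dvd_rfl
  have c1 : (j : ℤ) * (-h' * s) ≡ (k : ℤ) * s [ZMOD (d : ℤ)] := by
    calc (j : ℤ) * (-h' * s) ≡ (-h * (k : ℤ)) * (-h' * s) [ZMOD (d : ℤ)] := hjk.mul_right _
      _ = h * h' * ((k : ℤ) * s) := by ring
      _ ≡ 1 * ((k : ℤ) * s) [ZMOD (d : ℤ)] := hinv.mul_right _
      _ = (k : ℤ) * s := by ring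
  have c2 : (j : ℤ) * h' ≡ -(k : ℤ) [ZMOD (d : ℤ)] := by
    calc (j : ℤ) * h' ≡ (-h * (k : ℤ)) * h' [ZMOD (d : ℤ)] := hjk.mul_right _
      _ = h * h' * (-(k : ℤ)) := by ring
      _ ≡ 1 * (-(k : ℤ)) [ZMOD (d : ℤ)] := hinv.mul_right _
      _ = -(k : ℤ) := by ring
  have c3 : -(j : ℤ) ≡ h * (k : ℤ) [ZMOD (d : ℤ)] := by
    have := hjk.neg
    simpa using this
  have e1 : ee ((j : ℝ) * ((-h' * s : ℤ) : ℝ) / d) = ee ((k : ℝ) * ((s : ℤ) : ℝ) / d) := by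
    rw [show (j : ℝ) * ((-h' * s : ℤ) : ℝ) / d = (((j : ℤ) * (-h' * s) : ℤ) : ℝ) / d by
        push_cast; ring,
      show (k : ℝ) * ((s : ℤ) : ℝ) / d = (((k : ℤ) * s : ℤ) : ℝ) / d by push_cast; ring]
    exact ee_eq hd0 c1
  have e2 : ee ((j : ℝ) * ((h' : ℤ) : ℝ) / d) = ee (-(k : ℝ) / d) := by
    rw [show (j : ℝ) * ((h' : ℤ) : ℝ) / d = (((j : ℤ) * h' : ℤ) : ℝ) / d by push_cast; ring,
      show -(k : ℝ) / d = (((-(k : ℤ)) : ℤ) : ℝ) / d by push_cast; ring]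
    exact ee_eq hd0 c2
  have e3 : ee (-(j : ℝ) / d) = ee ((k : ℝ) * ((h : ℤ) : ℝ) / d) := by
    rw [show -(j : ℝ) / d = (((-(j : ℤ)) : ℤ) : ℝ) / d by push_cast; ring,
      show (k : ℝ) * ((h : ℤ) : ℝ) / d = (((h * (k : ℤ)) : ℤ) : ℝ) / d by push_cast; ring]
    exact ee_eq hd0 c3
  rw [e1, e2, e3]
  ring
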